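/- If [a_1, ..., a_{2n}] is a continued fraction with all entries nonzero even integers, then its value p/q (in lowest terms) satisfies: p is odd and q is even. -/

import Mathlib

/-- Value of a continued fraction `[a₁, …, aₙ] = a₁ + 1/(a₂ + 1/(⋯ + 1/aₙ))`,
evaluated in `ℚ` (with the convention `cfVal [] = 0`, so `cfVal [a] = a`). -/
def cfVal : List ℤ → ℚ
  | [] => 0
  | a :: l => a + (cfVal l)⁻¹

lemma cf_key (a : ℤ) (x : ℚ) (hx : x ≠ 0) :
    ∃ ε : ℤ, (ε = 1 ∨ ε = -1) ∧ (a + x⁻¹).num = ε * (a * x.num + x.den) ∧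
      ((a + x⁻¹).den : ℤ) = ε * x.num := by
  have hn : x.num ≠ 0 := Rat.num_ne_zero.mpr hx
  have hnQ : (x.num : ℚ) ≠ 0 := Int.cast_ne_zero.mpr hn
  have hcop : IsCoprime (a * x.num + (x.den : ℤ)) x.num := by
    have h1 : IsCoprime (x.den : ℤ) x.num := by
      rw [Int.isCoprime_iff_gcd_eq_one]
      simpa [Int.gcd, Nat.coprime_comm] using x.reduced
    have := h1.add_mul_left_left a
    convert this using 1
    · rfl
    ring
  have hcop' : Nat.Coprime (a * x.num + (x.den : ℤ)).natAbs x.num.natAbs :=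
    Int.isCoprime_iff_gcd_eq_one.mp hcop
  have heq : a + x⁻¹ = ((a * x.num + (x.den : ℤ) : ℤ) : ℚ) / ((x.num : ℤ) : ℚ) := by
    have hinv : x⁻¹ = (x.den : ℚ) / (x.num : ℚ) := by
      conv_lhs => rw [← Rat.num_div_den x]
      rw [inv_div]
    rw [hinv]
    push_cast
    field_simp
  rcases lt_or_gt_of_ne hn with hneg | hpos
  · have heq2 : a + x⁻¹ = ((-(a * x.num + (x.den : ℤ)) : ℤ) : ℚ) / ((-x.num : ℤ) : ℚ) := by
      rw [heq, Int.cast_neg, Int.cast_neg, neg_div_neg_eq]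
    have hcop2 : Nat.Coprime (-(a * x.num + (x.den : ℤ))).natAbs (-x.num).natAbs := by
      rw [Int.natAbs_neg, Int.natAbs_neg]; exact hcop'
    refine ⟨-1, Or.inr rfl, ?_, ?_⟩
    · rw [heq2, Rat.num_div_eq_of_coprime (by omega) hcop2]; ring
    · rw [heq2, Rat.den_div_eq_of_coprime (by omega) hcop2]; ring
  · refine ⟨1, Or.inl rfl, ?_, ?_⟩
    · rw [heq, Rat.num_div_eq_of_coprime hpos hcop', one_mul]
    · rw [heq, Rat.den_div_eq_of_coprime hpos hcop', one_mul]

lemma cf_aux (l : List ℤ) (hne : l ≠ []) (hl : ∀ a ∈ l, a ≠ 0 ∧ Even a) :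
    1 < |cfVal l| ∧
      (Even l.length → Odd (cfVal l).num ∧ Even (cfVal l).den) ∧
      (¬ Even l.length → Even (cfVal l).num ∧ Odd (cfVal l).den) := by
  induction l with
  | nil => exact absurd rfl hne
  | cons a t ih =>
    obtain ⟨ha0, ha2⟩ := hl a (List.mem_cons_self)
    have ha : 2 ≤ |a| := by
      rcases ha2 with ⟨k, rfl⟩
      rcases abs_cases (k + k) with ⟨h, _⟩ | ⟨h, _⟩ <;> omega
    rcases eq_or_ne t [] with rfl | ht
    · have hv : cfVal [a] = (a : ℚ) := by simp [cfVal]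
      refine ⟨?_, ?_, ?_⟩
      · rw [hv, ← Int.cast_abs]
        exact_mod_cast by omega
      · simp
      · intro _
        rw [hv]
        constructor
        · simpa using ha2
        · simp
    · obtain ⟨hxgt, hev, hodd⟩ := ih ht (fun b hb => hl b (List.mem_cons_of_mem a hb))
      set x := cfVal t with hxdef
      have hx0 : x ≠ 0 := by
        intro h; rw [h] at hxgt; norm_num at hxgt
      have hval : cfVal (a :: t) = a + x⁻¹ := rfl
      obtain ⟨ε, hε, hnum, hden⟩ := cf_key a x hx0
      rw [← hval] at hnum hden
      have habs : 1 < |cfVal (a :: t)| := by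
        rw [hval]
        have h1 : |x⁻¹| < 1 := by
          rw [abs_inv, inv_lt_one_iff₀]; right; exact hxgt
        have h2 : (2 : ℚ) ≤ |(a : ℚ)| := by
          rw [← Int.cast_abs]; exact_mod_cast ha
        calc (1 : ℚ) < |(a:ℚ)| - |x⁻¹| := by linarith
        _ ≤ |(a:ℚ) + x⁻¹| := by
          have := abs_sub_abs_le_abs_sub (a : ℚ) (-x⁻¹)
          simp only [abs_neg, sub_neg_eq_add] at this
          linarith
      have heps : ∀ z : ℤ, (Odd z → Odd (ε * z)) ∧ (Even z → Even (ε * z)) := by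
        intro z
        constructor
        · intro hz
          rcases hε with rfl | rfl
          · simpa using hz
          · simpa using hz.neg
        · intro hz
          exact hz.mul_left ε
      refine ⟨habs, ?_, ?_⟩
      · intro hlen
        have htodd : ¬ Even t.length := by
          simpa [Nat.even_add_one] using hlen
        obtain ⟨hnume, hdeno⟩ := hodd htodd
        have hdenoZ : Odd ((x.den : ℤ)) := by exact_mod_cast hdeno
        constructor
        · rw [hnum]
          exact (heps _).1 ((ha2.mul_right x.num).add_odd hdenoZ)
        · have : Even ((cfVal (a :: t)).den : ℤ) := by
            rw [hden]; exact (heps _).2 hnume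
          exact_mod_cast this
      · intro hlen
        have hteven : Even t.length := by
          simpa [Nat.even_add_one] using hlen
        obtain ⟨hnumo, hdene⟩ := hev hteven
        have hdeneZ : Even ((x.den : ℤ)) := by exact_mod_cast hdene
        constructor
        · rw [hnum]
          exact (heps _).2 ((ha2.mul_right x.num).add hdeneZ)
        · have : Odd ((cfVal (a :: t)).den : ℤ) := by
            rw [hden]; exact (heps _).1 hnumo
          exact_mod_cast this

/-- A nonempty continued fraction with all entries nonzero even integers and an even
number of entries has value p/q in lowest terms with p odd and q even. -/
theorem even_cf_value_odd_over_even (l : List ℤ) (hne : l ≠ [])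
    (hl : ∀ a ∈ l, a ≠ 0 ∧ Even a) (hlen : Even l.length) :
    Odd (cfVal l).num ∧ Even (cfVal l).den := by
  exact (cf_aux l hne hl).2.1 hlen
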